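/- There is no wait-free verifier that distributed runtime verifies linearizability for the queue object: for any candidate verifier using arbitrary base objects, there exist two indistinguishable infinite executions E and F (with the same per-process local state sequences) such that all finite prefixes of F restricted to the implementation are linearizable while some finite prefix of E restricted to the implementation is not, so the verifier violates soundness or completeness. -/

import Mathlib

namespace RV

/-- Queue operation descriptions. -/
inductive QOp where
  | enq (x : ℕ)
  | deq
deriving DecidableEq

/-- Response values: `ok` for Enq (true), a value, or `empty` for Deq. -/
inductive QVal where
  | ok
  | val (x : ℕ)
  | empty
deriving DecidableEq

/-- Events: invocation by process `p` of operation `o` with description `d`, or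
response to process `p` of operation `o` with value `v`. -/
inductive QEv where
  | inv (p o : ℕ) (d : QOp)
  | res (p o : ℕ) (v : QVal)
deriving DecidableEq

abbrev QHist := List QEv

def QEv.proc : QEv → ℕ
  | .inv p _ _ => p
  | .res p _ _ => p

def QEv.opid : QEv → ℕ
  | .inv _ o _ => o
  | .res _ o _ => o

def QEv.isInv : QEv → Bool
  | .inv _ _ _ => true
  | .res _ _ _ => false

/-- Process `p`'s subsequence of events. -/
def qproj (E : QHist) (p : ℕ) : QHist := E.filter (fun e => e.proc == p)

def qEquivalent (E F : QHist) : Prop := ∀ p, qproj E p = qproj F p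

/-- Operation `a` precedes operation `b`: the response of `a` occurs before the
invocation of `b`. -/
def qprec (E : QHist) (a b : ℕ) : Prop :=
  ∃ i j p q v d, i < j ∧ E[(i : ℕ)]? = some (QEv.res p a v) ∧
    E[(j : ℕ)]? = some (QEv.inv q b d)

def qPending (E : QHist) (o : ℕ) : Prop :=
  (∃ p d, QEv.inv p o d ∈ E) ∧ ∀ p v, QEv.res p o v ∉ E

def qhasRes (E : QHist) (o : ℕ) : Bool := E.any fun e => !e.isInv && e.opid == o

/-- Remove the invocations of pending operations. -/
def qcomp (E : QHist) : QHist := E.filter fun e => !e.isInv || qhasRes E e.opid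

/-- `E'` extends `E` by appending responses to some pending operations. -/
def qIsExtension (E E' : QHist) : Prop :=
  ∃ rs : QHist, E' = E ++ rs ∧
    (∀ e ∈ rs, e.isInv = false ∧ qPending E e.opid ∧
      ∃ d, QEv.inv e.proc e.opid d ∈ E) ∧
    rs.Pairwise fun a b => a.opid ≠ b.opid

/-- Per-process alternation: invocation, matching response, ..., possibly a final
pending invocation. -/
inductive QAlt : QHist → Prop where
  | nil : QAlt []
  | pend (p o : ℕ) (d : QOp) : QAlt [QEv.inv p o d]
  | step (p o : ℕ) (d : QOp) (v : QVal) (l : QHist) :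
      QAlt l → QAlt (QEv.inv p o d :: QEv.res p o v :: l)

def QWellFormed (E : QHist) : Prop :=
  (∀ p, QAlt (qproj E p)) ∧
  (∀ o, E.countP (fun e => e.isInv && e.opid == o) ≤ 1) ∧
  (∀ o, E.countP (fun e => !e.isInv && e.opid == o) ≤ 1)

/-- The sequential queue state machine: `QRun q S` holds when `S` is a sequential
history generated from queue state `q`. Enq(x) appends `x` and returns `ok`
(true); Deq removes and returns the head, or `empty` on the empty queue. -/
inductive QRun : List ℕ → QHist → Prop where
  | nil (q : List ℕ) : QRun q []
  | enq (q : List ℕ) (l : QHist) (p o x : ℕ) :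
      QRun (q ++ [x]) l → QRun q (QEv.inv p o (.enq x) :: QEv.res p o .ok :: l)
  | deqE (l : QHist) (p o : ℕ) :
      QRun [] l → QRun [] (QEv.inv p o .deq :: QEv.res p o .empty :: l)
  | deq (q : List ℕ) (l : QHist) (x p o : ℕ) :
      QRun q l → QRun (x :: q) (QEv.inv p o .deq :: QEv.res p o (.val x) :: l)

/-- Linearizability with respect to the sequential queue. -/
def QueueLin (E : QHist) : Prop :=
  ∃ E', qIsExtension E E' ∧ ∃ S, QRun [] S ∧ qEquivalent (qcomp E') S ∧
    ∀ a b, qprec (qcomp E') a b → qprec S a b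


/-! ### Auxiliary material for the proof -/

/-- The "bad" execution: p1's Deq returns 1 before p2 even invokes Enq(1). -/
def Ehist : QHist :=
  [.inv 1 1 .deq, .res 1 1 (.val 1), .inv 2 2 (.enq 1), .res 2 2 .ok]

/-- The "good" execution: Enq(1) completes before Deq returns 1. -/
def Fhist : QHist :=
  [.inv 2 2 (.enq 1), .res 2 2 .ok, .inv 1 1 .deq, .res 1 1 (.val 1)]

lemma qproj_nil_of_all (l : QHist) (h : ∀ p, qproj l p = []) : l = [] := by
  cases l with
  | nil => rfl
  | cons e t =>
    have := h e.proc
    simp [qproj] at this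

lemma qproj_E_other (p : ℕ) (h1 : p ≠ 1) (h2 : p ≠ 2) : qproj Ehist p = [] := by
  simp [Ehist, qproj, QEv.proc, List.filter_cons, beq_iff_eq, Ne.symm h1, Ne.symm h2]

lemma qproj_F_other (p : ℕ) (h1 : p ≠ 1) (h2 : p ≠ 2) : qproj Fhist p = [] := by
  simp [Fhist, qproj, QEv.proc, List.filter_cons, beq_iff_eq, Ne.symm h1, Ne.symm h2]

lemma qproj_EF : qproj Ehist = qproj Fhist := by
  funext p
  by_cases h1 : p = 1
  · subst h1; rfl
  by_cases h2 : p = 2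
  · subst h2; rfl
  rw [qproj_E_other p h1 h2, qproj_F_other p h1 h2]

lemma wf_E : QWellFormed Ehist := by
  refine ⟨?_, ?_, ?_⟩
  · intro p
    by_cases h1 : p = 1
    · subst h1
      exact QAlt.step 1 1 .deq (.val 1) [] QAlt.nil
    by_cases h2 : p = 2
    · subst h2
      exact QAlt.step 2 2 (.enq 1) .ok [] QAlt.nil
    rw [qproj_E_other p h1 h2]; exact QAlt.nil
  · intro o
    rcases eq_or_ne o 1 with rfl | h1
    · simp [Ehist, List.countP_cons, QEv.isInv, QEv.opid]
    rcases eq_or_ne o 2 with rfl | h2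
    · simp [Ehist, List.countP_cons, QEv.isInv, QEv.opid]
    simp [Ehist, List.countP_cons, QEv.isInv, QEv.opid, Ne.symm h1, Ne.symm h2]
  · intro o
    rcases eq_or_ne o 1 with rfl | h1
    · simp [Ehist, List.countP_cons, QEv.isInv, QEv.opid]
    rcases eq_or_ne o 2 with rfl | h2
    · simp [Ehist, List.countP_cons, QEv.isInv, QEv.opid]
    simp [Ehist, List.countP_cons, QEv.isInv, QEv.opid, Ne.symm h1, Ne.symm h2]

lemma wf_F : QWellFormed Fhist := by
  refine ⟨?_, ?_, ?_⟩
  · intro p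
    by_cases h1 : p = 1
    · subst h1
      exact QAlt.step 1 1 .deq (.val 1) [] QAlt.nil
    by_cases h2 : p = 2
    · subst h2
      exact QAlt.step 2 2 (.enq 1) .ok [] QAlt.nil
    rw [qproj_F_other p h1 h2]; exact QAlt.nil
  · intro o
    rcases eq_or_ne o 1 with rfl | h1
    · simp [Fhist, List.countP_cons, QEv.isInv, QEv.opid]
    rcases eq_or_ne o 2 with rfl | h2
    · simp [Fhist, List.countP_cons, QEv.isInv, QEv.opid]
    simp [Fhist, List.countP_cons, QEv.isInv, QEv.opid, Ne.symm h1, Ne.symm h2]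
  · intro o
    rcases eq_or_ne o 1 with rfl | h1
    · simp [Fhist, List.countP_cons, QEv.isInv, QEv.opid]
    rcases eq_or_ne o 2 with rfl | h2
    · simp [Fhist, List.countP_cons, QEv.isInv, QEv.opid]
    simp [Fhist, List.countP_cons, QEv.isInv, QEv.opid, Ne.symm h1, Ne.symm h2]

lemma ext_refl (E : QHist) : qIsExtension E E :=
  ⟨[], by simp, by simp, List.Pairwise.nil⟩

lemma lin_F_prefix : ∀ P, P <+: Fhist → QueueLin P := by
  intro P hP
  obtain ⟨t, ht⟩ := hP
  have hcases : P = [] ∨ P = [QEv.inv 2 2 (.enq 1)] ∨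
      P = [QEv.inv 2 2 (.enq 1), QEv.res 2 2 .ok] ∨
      P = [QEv.inv 2 2 (.enq 1), QEv.res 2 2 .ok, QEv.inv 1 1 .deq] ∨
      P = Fhist := by
    rcases P with _ | ⟨a, _ | ⟨b, _ | ⟨c, _ | ⟨d, rest⟩⟩⟩⟩ <;>
      simp_all [Fhist]
  rcases hcases with rfl | rfl | rfl | rfl | rfl
  · exact ⟨[], ext_refl _, [], QRun.nil [], fun p => rfl, fun a b h => h⟩
  · exact ⟨_, ext_refl _, [], QRun.nil [], fun p => rfl, fun a b h => h⟩
  · exact ⟨_, ext_refl _, [QEv.inv 2 2 (.enq 1), QEv.res 2 2 .ok],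
      QRun.enq [] [] 2 2 1 (QRun.nil _), fun p => rfl, fun a b h => h⟩
  · exact ⟨_, ext_refl _, [QEv.inv 2 2 (.enq 1), QEv.res 2 2 .ok],
      QRun.enq [] [] 2 2 1 (QRun.nil _), fun p => rfl, fun a b h => h⟩
  · exact ⟨_, ext_refl _, Fhist,
      QRun.enq [] _ 2 2 1 (QRun.deq [] [] 1 1 1 (QRun.nil [])),
      fun p => rfl, fun a b h => h⟩

lemma not_lin_E : ¬ QueueLin Ehist := by
  rintro ⟨E', ⟨rs, rfl, hrs, -⟩, S, hrun, heq, hprec⟩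
  have hrs0 : rs = [] := by
    cases rs with
    | nil => rfl
    | cons e rs' =>
      obtain ⟨-, ⟨⟨p, d, hinv⟩, hnores⟩, -⟩ := hrs e List.mem_cons_self
      simp [Ehist] at hinv
      rcases hinv with ⟨rfl, ho, rfl⟩ | ⟨rfl, ho, rfl⟩
      · exact (hnores 1 (.val 1) (by rw [ho]; simp [Ehist])).elim
      · exact (hnores 2 .ok (by rw [ho]; simp [Ehist])).elim
  subst hrs0
  rw [List.append_nil] at heq hprec
  have hcomp : qcomp Ehist = Ehist := by decide
  rw [hcomp] at heq hprec
  have hS12 : qprec S 1 2 :=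
    hprec 1 2 ⟨1, 2, 1, 2, .val 1, .enq 1, by omega, rfl, rfl⟩
  -- now force the shape of S
  have hother : ∀ p, p ≠ 1 → p ≠ 2 → qproj S p = [] := fun p h1 h2 =>
    ((qproj_E_other p h1 h2).symm.trans (heq p)).symm
  have h1 := heq 1
  have h2 := heq 2
  cases hrun with
  | nil =>
    simp [Ehist, qproj, List.filter_cons, QEv.proc] at h1
  | deqE l p o hl =>
    by_cases hp1 : p = 1
    · subst hp1
      simp [Ehist, qproj, List.filter_cons, QEv.proc] at h1
    by_cases hp2 : p = 2
    · subst hp2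
      simp [Ehist, qproj, List.filter_cons, QEv.proc] at h2
    have hop := hother p hp1 hp2
    simp [qproj, List.filter_cons, QEv.proc, Ne.symm hp1, Ne.symm hp2] at hop
  | enq q l p o x hl =>
    by_cases hp1 : p = 1
    · subst hp1
      simp [Ehist, qproj, List.filter_cons, QEv.proc] at h1
    by_cases hp2 : p = 2
    swap
    · have hop := hother p hp1 hp2
      simp [qproj, List.filter_cons, QEv.proc, Ne.symm hp1, Ne.symm hp2] at hop
    subst hp2
    simp [Ehist, qproj, List.filter_cons, QEv.proc] at h1 h2
    obtain ⟨⟨rfl, rfl⟩, -, hl2⟩ := h2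
    simp only [List.nil_append] at hl
    cases hl with
    | nil => simp at h1
    | enq q2 l2 p2 o2 x2 hl3 =>
      by_cases hq1 : p2 = 1
      · subst hq1
        simp [List.filter_cons, QEv.proc] at h1
      by_cases hq2 : p2 = 2
      · subst hq2
        exact (hl2 _ List.mem_cons_self) rfl
      have hop := hother p2 hq1 hq2
      simp [qproj, List.filter_cons, QEv.proc, Ne.symm hq1, Ne.symm hq2] at hop
    | deq q2 l2 x2 p2 o2 hl3 =>
      by_cases hq2 : p2 = 2
      · subst hq2
        exact (hl2 _ List.mem_cons_self) rfl
      by_cases hq1 : p2 = 1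
      swap
      · have hop := hother p2 hq1 hq2
        simp [qproj, List.filter_cons, QEv.proc, Ne.symm hq1, Ne.symm hq2] at hop
      subst hq1
      simp [List.filter_cons, QEv.proc] at h1
      obtain ⟨rfl, hl1⟩ := h1
      have hl20 : l2 = [] := by
        apply qproj_nil_of_all
        intro p
        by_cases hp1' : p = 1
        · subst hp1'
          simp only [qproj, List.filter_eq_nil_iff]
          intro a ha
          cases a <;> simpa [QEv.proc] using hl1 _ ha
        by_cases hp2' : p = 2
        · subst hp2'
          simp only [qproj, List.filter_eq_nil_iff]
          intro a ha
          cases a <;> simpa [QEv.proc] using hl2 _ (List.mem_cons_of_mem _ (List.mem_cons_of_mem _ ha))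
        have hop := hother p hp1' hp2'
        simpa [qproj, List.filter_cons, QEv.proc, Ne.symm hp1', Ne.symm hp2'] using hop
      subst hl20
      obtain ⟨i, j, pp, qq, v, d, hij, hi, hj⟩ := hS12
      have hj4 : j < 4 := by
        by_contra hc
        rw [List.getElem?_eq_none_iff.mpr (by simp; omega)] at hj
        exact Option.noConfusion rfl (heq_of_eq hj)
      interval_cases j <;> interval_cases i <;> simp_all

/-- There is no wait-free verifier that distributed runtime verifies
linearizability for the queue. Since the processes run asynchronously, any
verdict of a verifier is a function of the per-process local observation
sequences only; no such function can be simultaneously sound (never reporting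
error when every prefix of the implementation's history is linearizable) and
complete (reporting error whenever some prefix is not linearizable), because two
indistinguishable executions — identical per-process observations — can induce a
queue history that is linearizable in one and non-linearizable in the other. -/
theorem no_queue_verifier :
    ¬ ∃ V : (ℕ → QHist) → Bool,
      ∀ H : QHist, QWellFormed H →
        ((∀ P, P <+: H → QueueLin P) → V (qproj H) = false) ∧
        ((∃ P, P <+: H ∧ ¬ QueueLin P) → V (qproj H) = true) := by
  rintro ⟨V, hV⟩
  have hE : V (qproj Ehist) = true :=
    (hV Ehist wf_E).2 ⟨Ehist, List.prefix_refl _, not_lin_E⟩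
  have hF : V (qproj Fhist) = false :=
    (hV Fhist wf_F).1 lin_F_prefix
  rw [qproj_EF] at hE
  rw [hE] at hF
  exact Bool.noConfusion hF

end RV
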